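/- Let σ̂ ∈ {(1,1),(−1,−1)} and let {D_c : c ∈ C} be a continuous family of invertible real 2×2 matrices indexed by a compact set C, with D_c(ℝ²_{≥0}) ⊆ R^{σ̂} ∪ {0} for all c ∈ C, where R^{(1,1)} = ℝ²_{>0} and R^{(−1,−1)} = ℝ²_{<0}. Then for any σ ∈ {(1,1),(−1,−1)}, any σ̃ ∈ {(1,−1),(−1,1)}, and any δ, δ̃ ∈ ℝ²_{>0}, there exists q in the translated quadrant R^{σ̃}_{δ̃} = I^{σ̃}(ℝ²_{>0} + δ̃) such that D_c q ∈ R^{σ}_{δ} = I^{σ}(ℝ²_{>0} + δ) for all c ∈ C. -/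

import Mathlib

private lemma stmt5_aux (m M d y w z x : ℝ) (hm : 0 < m) (hy : 0 < y)
    (hmz : m ≤ z) (hzM : z ≤ M) (hw : m ≤ w) (hd : 0 ≤ d)
    (hx : (d + y * M + 1) / m ≤ x) : d < x * w - y * z := by
  have hMpos : 0 < M := lt_of_lt_of_le hm (hmz.trans hzM)
  have hxm : d + y * M + 1 ≤ x * m := (div_le_iff₀ hm).mp hx
  have hx0 : 0 ≤ x := by nlinarith
  nlinarith [mul_le_mul_of_nonneg_left hzM hy.le, mul_le_mul_of_nonneg_left hw hx0]

/-- for a continuous compact family of invertible matrices mapping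
the non-negative quadrant into a fixed open diagonal quadrant `R^σ̂ ∪ {0}`
(`σ̂ = (s,s)`, `s = ±1`), and for any diagonal quadrant `σ = (u,u)`,
anti-diagonal quadrant `σ̃ = (t,−t)` and positive translations `δ, δ̃`, there is
`q ∈ R^σ̃_δ̃` with `D_c q ∈ R^σ_δ` for all `c`. -/
theorem stmt5 {ι : Type*} [TopologicalSpace ι] [CompactSpace ι]
    (D : ι → Matrix (Fin 2) (Fin 2) ℝ) (hcont : Continuous D)
    (hinv : ∀ c, IsUnit (D c).det)
    (s : ℝ) (hs : s = 1 ∨ s = -1)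
    (hmap : ∀ c, ∀ v : Fin 2 → ℝ, (∀ i, 0 ≤ v i) →
      (D c).mulVec v = 0 ∨ ∀ i, 0 < s * (D c).mulVec v i)
    (u : ℝ) (hu : u = 1 ∨ u = -1) (t : ℝ) (ht : t = 1 ∨ t = -1)
    (δ δt : Fin 2 → ℝ) (hδ : ∀ i, 0 < δ i) (hδt : ∀ i, 0 < δt i) :
    ∃ q : Fin 2 → ℝ, (δt 0 < t * q 0 ∧ δt 1 < -t * q 1) ∧
      ∀ c, δ 0 < u * (D c).mulVec q 0 ∧ δ 1 < u * (D c).mulVec q 1 := by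
  have ht2 : t * t = 1 := by rcases ht with h | h <;> rw [h] <;> norm_num
  have hs2 : s * s = 1 := by rcases hs with h | h <;> rw [h] <;> norm_num
  rcases isEmpty_or_nonempty ι with hemp | hne
  · refine ⟨![t * (δt 0 + 1), -(t * (δt 1 + 1))], ⟨?_, ?_⟩, fun c => isEmptyElim c⟩
    · show δt 0 < t * (t * (δt 0 + 1))
      nlinarith [hδt 0]
    · show δt 1 < -t * -(t * (δt 1 + 1))
      nlinarith [hδt 1]
  · -- column entries, scaled by s
    set f : Fin 2 → ι → Fin 2 → ℝ :=
      fun j c i => s * (D c).mulVec (Pi.single j 1) i with hf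
    have hpos : ∀ j c i, 0 < f j c i := by
      intro j c i
      rcases hmap c (Pi.single j 1) (fun i => by
        rcases eq_or_ne i j with h | h
        · subst h; simp
        · simp [Pi.single_eq_of_ne h]) with h0 | h1
      · exfalso
        have hinj : Function.Injective (D c).mulVec :=
          Matrix.mulVec_injective_iff_isUnit.mpr
            ((Matrix.isUnit_iff_isUnit_det _).mpr (hinv c))
        have := hinj (a₁ := Pi.single j 1) (a₂ := 0) (by simpa using h0)
        have := congrFun this j
        simp at this
      · exact h1 i
    have hfc : ∀ j i, Continuous (fun c => f j c i) := by
      intro j i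
      have h1 : ∀ k, Continuous (fun c => D c i k) := fun k =>
        ((continuous_apply k).comp ((continuous_apply i).comp hcont))
      have : (fun c => f j c i) =
          fun c => s * ∑ k, D c i k * Pi.single (M := fun _ : Fin 2 => ℝ) j 1 k := by
        funext c
        simp [hf, Matrix.mulVec, dotProduct]
      rw [this]
      exact continuous_const.mul
        (continuous_finset_sum _ fun k _ => (h1 k).mul continuous_const)
    -- uniform bounds via compactness
    set F : ι → ℝ := fun c =>
      min (min (f 0 c 0) (f 0 c 1)) (min (f 1 c 0) (f 1 c 1)) with hF
    set G : ι → ℝ := fun c =>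
      max (max (f 0 c 0) (f 0 c 1)) (max (f 1 c 0) (f 1 c 1)) with hG
    have hFc : Continuous F := (((hfc 0 0).min (hfc 0 1)).min ((hfc 1 0).min (hfc 1 1)))
    have hGc : Continuous G := (((hfc 0 0).max (hfc 0 1)).max ((hfc 1 0).max (hfc 1 1)))
    obtain ⟨c₁, -, hc₁'⟩ := isCompact_univ.exists_isMinOn (Set.univ_nonempty)
      hFc.continuousOn
    obtain ⟨c₂, -, hc₂'⟩ := isCompact_univ.exists_isMaxOn (Set.univ_nonempty)
      hGc.continuousOn
    have hc₁ : ∀ c : ι, F c₁ ≤ F c := fun c => hc₁' (Set.mem_univ c)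
    have hc₂ : ∀ c : ι, G c ≤ G c₂ := fun c => hc₂' (Set.mem_univ c)
    set m : ℝ := F c₁ with hm
    set M : ℝ := G c₂ with hM
    have hm0 : 0 < m := by
      simp only [hm, hF, lt_min_iff]
      exact ⟨⟨hpos 0 c₁ 0, hpos 0 c₁ 1⟩, ⟨hpos 1 c₁ 0, hpos 1 c₁ 1⟩⟩
    have hmle : ∀ j c i, m ≤ f j c i := by
      intro j c i
      have h := hc₁ c
      simp only [hF, le_inf_iff] at h
      fin_cases j <;> fin_cases i
      exacts [h.1.1, h.1.2, h.2.1, h.2.2]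
    have hMge : ∀ j c i, f j c i ≤ M := by
      intro j c i
      have h := hc₂ c
      simp only [hG, sup_le_iff] at h
      fin_cases j <;> fin_cases i
      exacts [h.1.1, h.1.2, h.2.1, h.2.2]
    set d : ℝ := max (δ 0) (δ 1) with hd
    have hd0 : 0 ≤ d := le_trans (hδ 0).le (le_max_left _ _)
    -- decomposition of mulVec q
    have hdec : ∀ (x y : ℝ) (c : ι) (i : Fin 2),
        (D c).mulVec ![t * x, -(t * y)] i
          = (t * x) * (D c).mulVec (Pi.single 0 1) i
            + (-(t * y)) * (D c).mulVec (Pi.single 1 1) i := by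
      intro x y c i
      simp [Matrix.mulVec, dotProduct, Fin.sum_univ_two]
      ring
    have hkey : ∀ (x y : ℝ) (c : ι) (i : Fin 2),
        u * (D c).mulVec ![t * x, -(t * y)] i
          = (u * t * s) * (x * f 0 c i - y * f 1 c i) := by
      intro x y c i
      rw [hdec]
      simp only [hf]
      linear_combination (-(u * t * (x * (D c).mulVec (Pi.single 0 1) i
        - y * (D c).mulVec (Pi.single 1 1) i))) * hs2
    have hε : u * t * s = 1 ∨ u * t * s = -1 := by
      rcases hu with h | h <;> rcases ht with h' | h' <;> rcases hs with h'' | h'' <;>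
        rw [h, h', h''] <;> norm_num
    rcases hε with hε | hε
    · -- need x * f0 - y * f1 > δ i
      set y : ℝ := δt 1 + 1 with hy
      have hy0 : 0 < y := by have := hδt 1; positivity
      set x : ℝ := max (δt 0 + 1) ((d + y * M + 1) / m) with hx
      refine ⟨![t * x, -(t * y)], ⟨?_, ?_⟩, fun c => ?_⟩
      · show δt 0 < t * (t * x)
        have h1 : δt 0 + 1 ≤ x := le_max_left _ _
        have h2 : t * (t * x) = x := by rw [← mul_assoc, ht2, one_mul]
        linarith
      · show δt 1 < -t * -(t * y)
        have h2 : -t * -(t * y) = y := by rw [neg_mul_neg, ← mul_assoc, ht2, one_mul]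
        rw [h2, hy]; linarith [hδt 1]
      · have H : ∀ i, δ i < u * (D c).mulVec ![t * x, -(t * y)] i := by
          intro i
          rw [hkey, hε, one_mul]
          exact lt_of_le_of_lt (le_max_iff.mpr (by fin_cases i <;> simp [hd]))
            (stmt5_aux m M d y (f 0 c i) (f 1 c i) x hm0 hy0 (hmle 1 c i)
              (hMge 1 c i) (hmle 0 c i) hd0 (le_max_right _ _))
        exact ⟨H 0, H 1⟩
    · -- need y * f1 - x * f0 > δ i
      set x : ℝ := δt 0 + 1 with hx
      have hx0 : 0 < x := by have := hδt 0; positivity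
      set y : ℝ := max (δt 1 + 1) ((d + x * M + 1) / m) with hy
      refine ⟨![t * x, -(t * y)], ⟨?_, ?_⟩, fun c => ?_⟩
      · show δt 0 < t * (t * x)
        have h2 : t * (t * x) = x := by rw [← mul_assoc, ht2, one_mul]
        rw [h2, hx]; linarith [hδt 0]
      · show δt 1 < -t * -(t * y)
        have h1 : δt 1 + 1 ≤ y := le_max_left _ _
        have h2 : -t * -(t * y) = y := by rw [neg_mul_neg, ← mul_assoc, ht2, one_mul]
        linarith
      · have H : ∀ i, δ i < u * (D c).mulVec ![t * x, -(t * y)] i := by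
          intro i
          rw [hkey, hε]
          have h := stmt5_aux m M d x (f 1 c i) (f 0 c i) y hm0 hx0 (hmle 0 c i)
            (hMge 0 c i) (hmle 1 c i) hd0 (le_max_right _ _)
          have hle : δ i ≤ d := le_max_iff.mpr (by fin_cases i <;> simp [hd])
          linarith
        exact ⟨H 0, H 1⟩
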